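/- For every real c ≥ 0 and every real ε > 0 there exists an integer k₀ such that for every integer k ≥ k₀ there exists m₀ such that for every integer m ≥ m₀ there exists a partition system β(m, L, k, d) with universe of size m, with L = ⌈(log₂ m)^c⌉ partitions, each partition consisting of k parts, and with d ≥ (1 − ε) · k · ln m; that is, every cover of the universe by parts of the partitions in which no two chosen parts belong to the same partition uses at least (1 − ε) · k · ln m parts. -/

import Mathlib

open Finset Fintype Filter Real


/-- Core counting lemma: if the union bound quantity is `< 1`, there is a tuple of
partitions (given by `w`) such that no small "rainbow" family covers all of `Fin M`. -/
lemma exists_good_w (k L D M : ℕ) (hk : 1 ≤ k) (hL : 1 ≤ L)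
    (hlt : ((D : ℝ) + 1) * ((L * k : ℕ) : ℝ) ^ D *
        (1 - (((k : ℝ) - 1) / k) ^ D) ^ M < 1) :
    ∃ w : Fin M → Fin L → Fin k,
      ∀ S : Finset (Fin L × Fin k), S.card ≤ D →
        (∀ x ∈ S, ∀ y ∈ S, x.1 = y.1 → x = y) →
        ¬ (∀ y : Fin M, ∃ p ∈ S, w y p.1 = p.2) := by
  classical
  set r : ℝ := ((k : ℝ) - 1) / k with hr
  have hk0 : (0:ℝ) < k := by exact_mod_cast hk
  have hr0 : 0 ≤ r := by
    apply div_nonneg _ hk0.le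
    have : (1:ℝ) ≤ k := by exact_mod_cast hk
    linarith
  have hr1 : r ≤ 1 := by
    rw [div_le_one hk0]; linarith
  set A : Finset (Fin L × Fin k) → Finset (Fin L → Fin k) :=
    fun S => univ.filter (fun f => ∃ p ∈ S, f p.1 = p.2) with hA
  set Bad : Finset (Fin L × Fin k) → Finset (Fin M → Fin L → Fin k) :=
    fun S => Fintype.piFinset (fun _ => A S) with hBad
  set 𝒮 : Finset (Finset (Fin L × Fin k)) :=
    univ.filter (fun S => S.card ≤ D ∧ ∀ x ∈ S, ∀ y ∈ S, x.1 = y.1 → x = y) with h𝒮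
  -- the key cardinality estimate for a single S
  have hAcard : ∀ S ∈ 𝒮, ((A S).card : ℝ) ≤ (k:ℝ)^L * (1 - r ^ D) := by
    intro S hS
    rw [h𝒮, mem_filter] at hS
    obtain ⟨-, hSD, hSinj⟩ := hS
    set V : Fin L → Finset (Fin k) := fun j => univ.filter (fun a => (j, a) ∈ S) with hV
    have hVle : ∀ j, (V j).card ≤ 1 := by
      intro j
      apply Finset.card_le_one.2
      intro a ha b hb
      rw [hV, mem_filter] at ha hb
      have := hSinj _ ha.2 _ hb.2 rfl
      exact congrArg Prod.snd this
    have hVk : ∀ j, (V j).card ≤ k := by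
      intro j
      simpa using Finset.card_le_card (Finset.subset_univ (V j))
    -- A S is the complement of the avoiding piFinset
    have hAeq : A S = univ \ Fintype.piFinset (fun j => (V j)ᶜ) := by
      ext f
      simp only [hA, mem_filter, mem_univ, true_and, Finset.mem_sdiff, Fintype.mem_piFinset,
        Finset.mem_compl, hV, mem_filter]
      constructor
      · rintro ⟨p, hp, hfp⟩ hcon
        exact hcon p.1 (by rwa [hfp])
      · intro h
        by_contra hcon
        push_neg at hcon
        exact h (fun j => fun hj => hcon (j, f j) hj rfl)
    have hcardA : (A S).card = k ^ L - (Fintype.piFinset (fun j => (V j)ᶜ)).card := by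
      rw [hAeq, Finset.card_sdiff_of_subset (Finset.subset_univ _)]
      congr 1
      simp [Finset.card_univ]
    have hcardPi : (Fintype.piFinset (fun j => (V j)ᶜ)).card = ∏ j, (k - (V j).card) := by
      rw [Fintype.card_piFinset]
      congr 1
      ext j
      rw [Finset.card_compl]
      simp
    -- sum of fiber cards equals S.card
    have hsum : ∑ j, (V j).card = S.card := by
      rw [Finset.card_eq_sum_card_fiberwise (f := Prod.fst) (t := univ) (fun x _ => mem_univ _)]
      apply Finset.sum_congr rfl
      intro j _
      apply Finset.card_bij (fun a _ => (j, a))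
      · intro a ha
        rw [hV, mem_filter] at ha
        simp [ha.2]
      · intro a ha b hb h
        exact congrArg Prod.snd h
      · intro p hp
        rw [mem_filter] at hp
        refine ⟨p.2, ?_, ?_⟩
        · rw [hV, mem_filter]
          refine ⟨mem_univ _, ?_⟩
          rw [← hp.2]
          simpa using hp.1
        · exact Prod.ext hp.2.symm rfl
    -- real lower bound on the avoiding count
    have hprod : ((k:ℝ))^L * r ^ D ≤ ((∏ j, (k - (V j).card) : ℕ) : ℝ) := by
      push_cast [Nat.cast_prod]
      have hcast : ∀ j : Fin L, ((k - (V j).card : ℕ) : ℝ) = (k:ℝ) - (V j).card := by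
        intro j; rw [Nat.cast_sub (hVk j)]
      calc (k:ℝ)^L * r ^ D ≤ (k:ℝ)^L * r ^ (∑ j, (V j).card) := by
            apply mul_le_mul_of_nonneg_left _ (by positivity)
            apply pow_le_pow_of_le_one hr0 hr1
            rw [hsum]; exact hSD
        _ = ∏ j : Fin L, ((k:ℝ) * r ^ (V j).card) := by
            rw [Finset.prod_mul_distrib, Finset.prod_const, Finset.prod_pow_eq_pow_sum]
            simp [Finset.card_univ]
        _ ≤ ∏ j : Fin L, ((k - (V j).card : ℕ) : ℝ) := by
            apply Finset.prod_le_prod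
            · intro j _; positivity
            · intro j _
              rw [hcast j]
              rcases Nat.le_one_iff_eq_zero_or_eq_one.mp (hVle j) with h | h <;> rw [h]
              · simp
              · rw [hr]; field_simp; norm_num
    have hple : (Fintype.piFinset (fun j => (V j)ᶜ)).card ≤ k ^ L := by
      calc (Fintype.piFinset (fun j => (V j)ᶜ)).card
          ≤ (univ : Finset (Fin L → Fin k)).card :=
            Finset.card_le_card (Finset.subset_univ _)
        _ = k ^ L := by simp [Finset.card_univ]
    rw [hcardA, Nat.cast_sub hple, hcardPi]
    have h := hprod
    push_cast at h ⊢
    nlinarith [h]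
  -- cardinality of the union of bad events
  have hBadcard : ∀ S, (Bad S).card = (A S).card ^ M := by
    intro S
    rw [hBad]
    simp [Fintype.card_piFinset]
  have hLk1 : (1:ℝ) ≤ ((L * k : ℕ) : ℝ) := by
    exact_mod_cast Nat.one_le_iff_ne_zero.2 (Nat.mul_ne_zero (by omega) (by omega))
  have h𝒮card : (𝒮.card : ℝ) ≤ ((D:ℝ) + 1) * ((L * k : ℕ) : ℝ) ^ D := by
    have hsub : 𝒮 ⊆ (Finset.range (D+1)).biUnion
        (fun t => Finset.powersetCard t (univ : Finset (Fin L × Fin k))) := by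
      intro S hS
      rw [h𝒮, mem_filter] at hS
      rw [Finset.mem_biUnion]
      exact ⟨S.card, Finset.mem_range.2 (Nat.lt_succ_of_le hS.2.1),
        Finset.mem_powersetCard.2 ⟨Finset.subset_univ _, rfl⟩⟩
    calc (𝒮.card : ℝ)
        ≤ (((Finset.range (D+1)).biUnion
            (fun t => Finset.powersetCard t (univ : Finset (Fin L × Fin k)))).card : ℝ) := by
          exact_mod_cast Finset.card_le_card hsub
      _ ≤ ∑ t ∈ Finset.range (D+1),
            ((Finset.powersetCard t (univ : Finset (Fin L × Fin k))).card : ℝ) := by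
          exact_mod_cast Finset.card_biUnion_le
      _ ≤ ∑ t ∈ Finset.range (D+1), ((L * k : ℕ) : ℝ) ^ D := by
          apply Finset.sum_le_sum
          intro t ht
          rw [Finset.card_powersetCard]
          have h1 : ((Finset.card (univ : Finset (Fin L × Fin k))).choose t : ℝ)
              ≤ ((L * k : ℕ) : ℝ) ^ t := by
            have h0 := Nat.choose_le_pow_div (α := ℝ) t (Finset.card (univ : Finset (Fin L × Fin k)))
            have hfac : (1:ℝ) ≤ (t.factorial : ℝ) := by
              exact_mod_cast Nat.one_le_iff_ne_zero.2 (Nat.factorial_ne_zero t)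
            have hcardu : (Finset.card (univ : Finset (Fin L × Fin k))) = L * k := by
              simp [Finset.card_univ]
            calc ((Finset.card (univ : Finset (Fin L × Fin k))).choose t : ℝ)
                ≤ ((Finset.card (univ : Finset (Fin L × Fin k))) ^ t : ℝ) / (t.factorial : ℝ) := by
                  exact_mod_cast h0
              _ ≤ ((Finset.card (univ : Finset (Fin L × Fin k))) ^ t : ℝ) := by
                  apply div_le_self (by positivity) hfac
              _ = ((L * k : ℕ) : ℝ) ^ t := by rw [hcardu]
          refine h1.trans ?_
          exact pow_le_pow_right₀ hLk1 (Nat.lt_succ_iff.mp (Finset.mem_range.1 ht))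
      _ = ((D:ℝ) + 1) * ((L * k : ℕ) : ℝ) ^ D := by
          rw [Finset.sum_const, Finset.card_range, nsmul_eq_mul]
          push_cast; ring
  -- the grand union bound
  have hq1 : r ^ D ≤ 1 := pow_le_one₀ hr0 hr1
  have hB0 : (0:ℝ) ≤ (k:ℝ)^L * (1 - r^D) := mul_nonneg (by positivity) (by linarith)
  have hpos : (0:ℝ) < ((k:ℝ)^L)^M := by positivity
  have huniv : (Fintype.card (Fin M → Fin L → Fin k) : ℝ) = ((k:ℝ)^L)^M := by
    rw [Fintype.card_fun, Fintype.card_fun]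
    push_cast
    simp
  have hlt2 : (((𝒮.biUnion Bad).card : ℕ) : ℝ) < (Fintype.card (Fin M → Fin L → Fin k) : ℝ) := by
    calc (((𝒮.biUnion Bad).card : ℕ) : ℝ)
        ≤ ∑ S ∈ 𝒮, ((Bad S).card : ℝ) := by exact_mod_cast Finset.card_biUnion_le
      _ ≤ ∑ S ∈ 𝒮, ((k:ℝ)^L * (1 - r^D))^M := by
          apply Finset.sum_le_sum
          intro S hS
          rw [hBadcard]
          push_cast
          exact pow_le_pow_left₀ (by positivity) (hAcard S hS) M
      _ = (𝒮.card : ℝ) * ((k:ℝ)^L * (1 - r^D))^M := by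
          rw [Finset.sum_const, nsmul_eq_mul]
      _ ≤ (((D:ℝ) + 1) * ((L * k : ℕ) : ℝ) ^ D) * ((k:ℝ)^L * (1 - r^D))^M := by
          exact mul_le_mul_of_nonneg_right h𝒮card (pow_nonneg hB0 M)
      _ = (((D:ℝ) + 1) * ((L * k : ℕ) : ℝ) ^ D * (1 - r^D)^M) * ((k:ℝ)^L)^M := by
          rw [mul_pow]; ring
      _ < 1 * ((k:ℝ)^L)^M := by
          exact mul_lt_mul_of_pos_right hlt hpos
      _ = (Fintype.card (Fin M → Fin L → Fin k) : ℝ) := by rw [one_mul, huniv]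
  have hex : ∃ w, w ∉ 𝒮.biUnion Bad := by
    by_contra h
    push_neg at h
    have hsub2 : (univ : Finset (Fin M → Fin L → Fin k)) ⊆ 𝒮.biUnion Bad := fun w _ => h w
    have hc := Finset.card_le_card hsub2
    rw [Finset.card_univ] at hc
    have : (Fintype.card (Fin M → Fin L → Fin k) : ℝ) ≤ (((𝒮.biUnion Bad).card : ℕ) : ℝ) := by
      exact_mod_cast hc
    linarith
  obtain ⟨w, hw⟩ := hex
  refine ⟨w, ?_⟩
  intro S hSD hSinj hcov
  apply hw
  rw [Finset.mem_biUnion]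
  refine ⟨S, ?_, ?_⟩
  · rw [h𝒮, mem_filter]
    exact ⟨mem_univ _, hSD, hSinj⟩
  · rw [hBad]
    simp only [Fintype.mem_piFinset]
    intro y
    rw [hA]
    exact Finset.mem_filter.2 ⟨mem_univ _, hcov y⟩



lemma ev_sq_exp (C δ : ℝ) (hδ : 0 < δ) :
    ∀ᶠ y : ℝ in atTop, C * y ^ 2 < Real.exp (δ * y) := by
  have h0 : Tendsto (fun z : ℝ => z ^ 2 * Real.exp (-z)) atTop (nhds 0) :=
    tendsto_pow_mul_exp_neg_atTop_nhds_zero 2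
  have h1 : Tendsto (fun y : ℝ => δ * y) atTop atTop :=
    Tendsto.const_mul_atTop hδ tendsto_id
  have h2 : Tendsto (fun y : ℝ => (δ * y) ^ 2 * Real.exp (-(δ * y))) atTop (nhds 0) :=
    h0.comp h1
  have h3 : Tendsto (fun y : ℝ => (C / δ ^ 2) * ((δ * y) ^ 2 * Real.exp (-(δ * y))))
      atTop (nhds 0) := by
    simpa using h2.const_mul (C / δ ^ 2)
  have h4 : Tendsto (fun y : ℝ => C * y ^ 2 * Real.exp (-(δ * y))) atTop (nhds 0) := by
    refine h3.congr (fun y => ?_)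
    field_simp
  filter_upwards [h4.eventually_lt_const (by norm_num : (0:ℝ) < 1)] with y hy
  have hexp : 0 < Real.exp (δ * y) := Real.exp_pos _
  have := mul_lt_mul_of_pos_right hy hexp
  rw [one_mul, mul_assoc, ← Real.exp_add] at this
  simpa using this

lemma ev_rpow_lin (c : ℝ) (hc : 0 ≤ c) :
    ∀ᶠ y : ℝ in atTop, (2 * y) ^ c + 2 ≤ Real.exp y / 2 := by
  have h0 : Tendsto (fun y : ℝ => Real.exp y / y ^ c) atTop atTop :=
    tendsto_exp_div_rpow_atTop c
  filter_upwards [h0.eventually_ge_atTop (8 * 2 ^ c), eventually_ge_atTop (1:ℝ)] with y h8 hy1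
  have hy0 : (0:ℝ) ≤ y := by linarith
  have hyc1 : (1:ℝ) ≤ y ^ c := Real.one_le_rpow hy1 hc
  have hycpos : (0:ℝ) < y ^ c := by linarith
  have h2c : (1:ℝ) ≤ (2:ℝ) ^ c := Real.one_le_rpow (by norm_num) hc
  have hexp : 8 * 2 ^ c * y ^ c ≤ Real.exp y := by
    rw [le_div_iff₀ hycpos] at h8
    linarith
  have hmul : (2 * y) ^ c = 2 ^ c * y ^ c := Real.mul_rpow (by norm_num) hy0
  rw [hmul]
  nlinarith [mul_le_mul_of_nonneg_left hyc1 (le_trans (by norm_num) h2c)]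



set_option maxHeartbeats 1000000 in
lemma partition_main (c : ℝ) (hc : 0 ≤ c) (ε : ℝ) (hε : 0 < ε) (hε2 : ε ≤ 1/2) :
    ∃ k₀ : ℕ, ∀ k : ℕ, k₀ ≤ k →
      ∃ m₀ : ℕ, ∀ m : ℕ, m₀ ≤ m →
        ∃ P : Fin ⌈(Real.logb 2 m) ^ c⌉₊ → Fin k → Finset (Fin m),
          (∀ j, ∀ i i' : Fin k, i ≠ i' → Disjoint (P j i) (P j i')) ∧
          (∀ j, Finset.univ.biUnion (P j) = Finset.univ) ∧
          Function.Injective (fun j => Finset.univ.image (P j)) ∧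
          (∀ S : Finset (Fin ⌈(Real.logb 2 m) ^ c⌉₊ × Fin k),
            (∀ x ∈ S, ∀ y ∈ S, x.1 = y.1 → x = y) →
            S.biUnion (fun p => P p.1 p.2) = Finset.univ →
            (1 - ε) * k * Real.log m ≤ S.card) := by
  refine ⟨⌈2/ε⌉₊ + 2, ?_⟩
  intro k hk
  -- basic facts about k
  have hkR : 2/ε + 2 ≤ (k:ℝ) := by
    have h1 : (2/ε : ℝ) ≤ (⌈2/ε⌉₊ : ℝ) := Nat.le_ceil _
    have h2 : ((⌈2/ε⌉₊ + 2 : ℕ) : ℝ) ≤ (k:ℝ) := by exact_mod_cast hk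
    push_cast at h2
    linarith
  have hk2 : 2 ≤ k := by omega
  have hk1R : (1:ℝ) ≤ (k:ℝ) := by exact_mod_cast Nat.one_le_of_lt hk2
  have hk2R : (2:ℝ) ≤ (k:ℝ) := by exact_mod_cast hk2
  have hkRpos : (0:ℝ) < k := by linarith
  have hklog0 : 0 ≤ Real.log k := Real.log_nonneg hk1R
  set C₁ : ℝ := ((k:ℝ)+2)*(2+c+Real.log k) with hC₁
  have hC₁pos : 0 < C₁ := by
    apply mul_pos <;> nlinarith
  -- the `eventually` facts
  have hlogm : Tendsto (fun m : ℕ => Real.log m) atTop atTop :=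
    Real.tendsto_log_atTop.comp tendsto_natCast_atTop_atTop
  have A1 : ∀ᶠ m : ℕ in atTop,
      4 * Real.exp 1 * C₁ * (Real.log m)^2 < Real.exp ((ε/2) * Real.log m) :=
    hlogm.eventually (ev_sq_exp (4 * Real.exp 1 * C₁) (ε/2) (by positivity))
  have A2 : ∀ᶠ m : ℕ in atTop, (2 * Real.log m) ^ c + 2 ≤ (m:ℝ)/2 := by
    have h := hlogm.eventually (ev_rpow_lin c hc)
    filter_upwards [h, eventually_ge_atTop 1] with m h1 h2
    have : Real.exp (Real.log m) = m := Real.exp_log (by exact_mod_cast h2)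
    rw [this] at h1
    exact h1
  have A3 : ∀ᶠ m : ℕ in atTop, 3 ≤ m := eventually_ge_atTop 3
  obtain ⟨m₀, hm₀⟩ := eventually_atTop.1 ((A1.and A2).and A3)
  refine ⟨m₀, ?_⟩
  intro m hm
  obtain ⟨⟨h1, h2⟩, hm3⟩ := hm₀ m hm
  clear hm₀ A1 A2 A3 hlogm hm
  -- facts about m
  have hmR : (3:ℝ) ≤ (m:ℝ) := by exact_mod_cast hm3
  have hm0R : (0:ℝ) < m := by linarith
  set u := Real.log m with hu
  have hu1 : 1 ≤ u := by
    rw [hu, Real.le_log_iff_exp_le hm0R]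
    have := Real.exp_one_lt_d9
    linarith
  have hu0 : 0 < u := by linarith
  have hlog2pos : (0:ℝ) < Real.log 2 := Real.log_pos (by norm_num)
  have hlogb_eq : Real.logb 2 (m:ℝ) = u / Real.log 2 := by rw [Real.logb, hu]
  have hlogb_nonneg : 0 ≤ Real.logb 2 (m:ℝ) := by
    rw [hlogb_eq]; positivity
  have hlogb_le : Real.logb 2 (m:ℝ) ≤ 2*u := by
    rw [hlogb_eq, div_le_iff₀ hlog2pos]
    nlinarith [Real.log_two_gt_d9]
  set L := ⌈(Real.logb 2 (m:ℝ)) ^ c⌉₊ with hLdef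
  have hL1 : 1 ≤ L := by
    rw [hLdef, Nat.one_le_ceil_iff]
    have : (1:ℝ) ≤ Real.logb 2 (m:ℝ) := by
      rw [hlogb_eq, le_div_iff₀ hlog2pos]
      nlinarith [Real.log_le_sub_one_of_pos (show (0:ℝ) < 2 by norm_num)]
    positivity
  have hrpow1 : (1:ℝ) ≤ (2*u)^c := Real.one_le_rpow (by linarith) hc
  have hLreal : (L:ℝ) ≤ (2*u)^c + 1 := by
    rw [hLdef]
    have h := Nat.ceil_lt_add_one (Real.rpow_nonneg hlogb_nonneg c)
    have h2' : (Real.logb 2 (m:ℝ))^c ≤ (2*u)^c :=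
      Real.rpow_le_rpow hlogb_nonneg hlogb_le hc
    linarith
  have hLm : (L:ℝ) + 1 ≤ (m:ℝ)/2 := by linarith
  have hLmnat : L + 1 ≤ m := by
    have : ((L + 1 : ℕ):ℝ) ≤ (m:ℝ) := by push_cast; linarith
    exact_mod_cast this
  set D := ⌈(1-ε)*(k:ℝ)*u⌉₊ with hDdef
  set M := m - (L+1) with hMdef
  have hMR : (m:ℝ)/2 ≤ (M:ℝ) := by
    rw [hMdef]
    rw [Nat.cast_sub hLmnat]
    push_cast
    linarith
  -- the inequality needed for the counting lemma
  set n : ℝ := ((L * k : ℕ) : ℝ) with hn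
  have hn1 : (1:ℝ) ≤ n := by
    rw [hn]
    exact_mod_cast Nat.one_le_iff_ne_zero.2 (Nat.mul_ne_zero (by omega) (by omega))
  have hn0 : (0:ℝ) < n := by linarith
  have hlogn0 : 0 ≤ Real.log n := Real.log_nonneg hn1
  set r : ℝ := ((k:ℝ)-1)/k with hr
  have hrpos : 0 < r := by rw [hr]; apply div_pos <;> linarith
  have hr1 : r ≤ 1 := by rw [hr, div_le_one hkRpos]; linarith
  set q : ℝ := r ^ D with hq
  have hq0 : 0 < q := pow_pos hrpos D
  have hq1 : q ≤ 1 := by rw [hq]; exact pow_le_one₀ hrpos.le hr1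
  have hD0R : (0:ℝ) ≤ (1-ε)*(k:ℝ)*u :=
    mul_nonneg (mul_nonneg (by linarith) (by linarith)) (by linarith)
  have hDle : (D:ℝ) ≤ (1-ε)*(k:ℝ)*u + 1 := (Nat.ceil_lt_add_one hD0R).le
  have hDlt : ∀ s : ℕ, (s:ℝ) < (1-ε)*(k:ℝ)*u → s < D := by
    intro s hs
    rw [hDdef]
    exact Nat.lt_ceil.2 hs
  have hMLsum : L + 1 + M = m := by omega
  clear_value L D M u
  clear hDdef hMdef hLdef
  have hD0 : (0:ℝ) ≤ (D:ℝ) := Nat.cast_nonneg D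
  -- step a : (1-q)^M ≤ exp (-(q*M))
  have hstepa : (1-q)^M ≤ Real.exp (-(q*((M:ℕ):ℝ))) := by
    have h1q : 1 - q ≤ Real.exp (-q) := by linarith [Real.add_one_le_exp (-q)]
    calc (1-q)^M ≤ (Real.exp (-q))^M := pow_le_pow_left₀ (by linarith) h1q M
      _ = Real.exp (-(q*((M:ℕ):ℝ))) := by rw [← Real.exp_nat_mul]; ring_nf
  -- step b : (D+1) * n^D ≤ exp ((D+1)*(1+log n))
  have hstepb : ((D:ℝ)+1) * n^D ≤ Real.exp (((D:ℝ)+1)*(1+Real.log n)) := by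
    have hb1 : (D:ℝ)+1 ≤ Real.exp (D:ℝ) := Real.add_one_le_exp _
    have hb2 : n^D = Real.exp ((D:ℝ) * Real.log n) := by
      rw [Real.exp_nat_mul, Real.exp_log hn0]
    calc ((D:ℝ)+1) * n^D ≤ Real.exp (D:ℝ) * Real.exp ((D:ℝ) * Real.log n) := by
          rw [← hb2]
          apply mul_le_mul_of_nonneg_right hb1 (by positivity)
      _ = Real.exp ((D:ℝ) + (D:ℝ)*Real.log n) := by rw [← Real.exp_add]
      _ ≤ Real.exp (((D:ℝ)+1)*(1+Real.log n)) := by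
          apply Real.exp_le_exp.2
          have hexp2 : ((D:ℝ)+1)*(1+Real.log n) = (D:ℝ) + (D:ℝ)*Real.log n + (1 + Real.log n) := by
            ring
          linarith [hlogn0, hexp2]
  -- step c : (D+1)*(1+log n) ≤ 2*C₁*u^2
  have hstepc : ((D:ℝ)+1)*(1+Real.log n) ≤ 2*C₁*u^2 := by
    have hDk : (D:ℝ)+1 ≤ ((k:ℝ)+2)*u := by
      have e1 : (1-ε)*(k:ℝ)*u ≤ (k:ℝ)*u := by
        have e0 : (0:ℝ) ≤ ε*(k:ℝ)*u := by positivity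
        linarith [e0]
      linarith [e1, hu1, hDle]
    have hL0R : (0:ℝ) < (L:ℝ) := by exact_mod_cast hL1
    have hlogL : Real.log (L:ℝ) ≤ 1 + c*(1+Real.log u) := by
      have hL2' : (L:ℝ) ≤ 2*(2*u)^c := by linarith
      have hlog1 : Real.log (L:ℝ) ≤ Real.log (2*(2*u)^c) :=
        Real.log_le_log hL0R hL2'
      have hlog2 : Real.log (2*(2*u)^c) = Real.log 2 + c * Real.log (2*u) := by
        rw [Real.log_mul (by norm_num) (by positivity), Real.log_rpow (by linarith)]
      have hlog3 : Real.log (2*u) = Real.log 2 + Real.log u := Real.log_mul (by norm_num) (by linarith)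
      have hlog2le : Real.log 2 ≤ 1 := by
        nlinarith [Real.log_le_sub_one_of_pos (show (0:ℝ) < 2 by norm_num)]
      have hlogu0 : 0 ≤ Real.log u := Real.log_nonneg hu1
      have hint := mul_le_mul_of_nonneg_left (by linarith : Real.log (2*u) ≤ 1 + Real.log u) hc
      linarith [hint]
    have hlogn : Real.log n = Real.log (L:ℝ) + Real.log (k:ℝ) := by
      rw [hn]
      push_cast
      exact Real.log_mul (by positivity) (by positivity)
    have hlogu0 : 0 ≤ Real.log u := Real.log_nonneg hu1
    have hx1 : 1 + Real.log n ≤ (2 + c + Real.log k)*(1 + Real.log u) := by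
      rw [hlogn]
      linarith [hlogL, mul_nonneg hklog0 hlogu0, hlogu0, hklog0, mul_nonneg hc hlogu0]
    have hx2 : 1 + Real.log u ≤ 2*u := by
      linarith [Real.log_le_sub_one_of_pos hu0]
    have hfac0 : (0:ℝ) ≤ 2 + c + Real.log k := by linarith
    calc ((D:ℝ)+1)*(1+Real.log n) ≤ (((k:ℝ)+2)*u) * ((2 + c + Real.log k)*(1 + Real.log u)) := by
          apply mul_le_mul hDk hx1 (by linarith [hlogn0]) (by positivity)
      _ ≤ (((k:ℝ)+2)*u) * ((2 + c + Real.log k)*(2*u)) := by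
          apply mul_le_mul_of_nonneg_left _ (by positivity)
          exact mul_le_mul_of_nonneg_left hx2 hfac0
      _ = 2*C₁*u^2 := by rw [hC₁]; ring
  -- step d : exp((ε/2)u)/(2e) ≤ q*M
  have hstepd : Real.exp ((ε/2)*u) / (2*Real.exp 1) ≤ q*((M:ℕ):ℝ) := by
    have hk1pos : (0:ℝ) < (k:ℝ)-1 := by linarith
    have hrexp : Real.exp (-(1/((k:ℝ)-1))) ≤ r := by
      rw [← Real.exp_log hrpos]
      apply Real.exp_le_exp.2
      have hinv : r⁻¹ = (k:ℝ)/((k:ℝ)-1) := by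
        rw [hr]; rw [inv_div]
      have hlr : Real.log r = - Real.log ((k:ℝ)/((k:ℝ)-1)) := by
        rw [← hinv, Real.log_inv, neg_neg]
      rw [hlr]
      have := Real.log_le_sub_one_of_pos (show (0:ℝ) < (k:ℝ)/((k:ℝ)-1) by positivity)
      have heq : (k:ℝ)/((k:ℝ)-1) - 1 = 1/((k:ℝ)-1) := by field_simp; ring
      linarith [this, heq]
    have hqexp : Real.exp (-((1-ε/2)*u+1)) ≤ q := by
      have hDb : (D:ℝ)/((k:ℝ)-1) ≤ (1-ε/2)*u + 1 := by
        rw [div_le_iff₀ hk1pos]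
        have h2ε : ε*(2/ε) = 2 := by field_simp
        have hkey : (1-ε)*(k:ℝ) ≤ (1-ε/2)*((k:ℝ)-1) := by
          linarith [mul_le_mul_of_nonneg_left hkR hε.le, h2ε]
        linarith [mul_le_mul_of_nonneg_right hkey hu0.le, hu1, hDle, hk2R]
      calc Real.exp (-((1-ε/2)*u+1)) ≤ Real.exp (-((D:ℝ)/((k:ℝ)-1))) := by
            apply Real.exp_le_exp.2; linarith
        _ = (Real.exp (-(1/((k:ℝ)-1))))^D := by
            rw [← Real.exp_nat_mul]; congr 1; field_simp
        _ ≤ r^D := pow_le_pow_left₀ (Real.exp_pos _).le hrexp D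
    have hM0 : (0:ℝ) ≤ ((M:ℕ):ℝ) := Nat.cast_nonneg M
    have hmexp : (m:ℝ) = Real.exp u := by rw [hu]; exact (Real.exp_log hm0R).symm
    have hprod : Real.exp (-((1-ε/2)*u+1)) * ((m:ℝ)/2) ≤ q * ((M:ℕ):ℝ) := by
      apply mul_le_mul hqexp hMR (by linarith) hq0.le
    have heq2 : Real.exp (-((1-ε/2)*u+1)) * ((m:ℝ)/2) = Real.exp ((ε/2)*u) / (2*Real.exp 1) := by
      rw [hmexp, eq_div_iff (by positivity)]
      calc Real.exp (-((1-ε/2)*u+1)) * (Real.exp u/2) * (2*Real.exp 1)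
          = Real.exp (-((1-ε/2)*u+1)) * Real.exp u * Real.exp 1 := by ring
        _ = Real.exp (-((1-ε/2)*u+1) + u + 1) := by rw [← Real.exp_add, ← Real.exp_add]
        _ = Real.exp ((ε/2)*u) := by congr 1; ring
    linarith [hprod, heq2]
  -- the final bound
  have hfin : 2*C₁*u^2 < q*((M:ℕ):ℝ) := by
    have h2e : (0:ℝ) < 2*Real.exp 1 := by positivity
    have : 2*C₁*u^2 < Real.exp ((ε/2)*u) / (2*Real.exp 1) := by
      rw [lt_div_iff₀ h2e]
      linarith [h1]
    linarith
  have hlt : ((D:ℝ) + 1) * n ^ D * (1 - q) ^ M < 1 := by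
    calc ((D:ℝ)+1) * n^D * (1-q)^M
        ≤ Real.exp (((D:ℝ)+1)*(1+Real.log n)) * Real.exp (-(q*((M:ℕ):ℝ))) := by
          apply mul_le_mul hstepb hstepa (pow_nonneg (by linarith) M) (by positivity)
      _ ≤ Real.exp (2*C₁*u^2) * Real.exp (-(q*((M:ℕ):ℝ))) := by
          apply mul_le_mul_of_nonneg_right (Real.exp_le_exp.2 hstepc) (by positivity)
      _ = Real.exp (2*C₁*u^2 - q*((M:ℕ):ℝ)) := by rw [← Real.exp_add]; ring_nf
      _ < 1 := by
          rw [← Real.exp_zero]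
          exact Real.exp_lt_exp.2 (by linarith)
  obtain ⟨w, hw⟩ := exists_good_w k L D M (by omega) hL1 hlt
  clear hlt hstepa hstepb hstepc hstepd hfin h1 h2 hDle hD0R hD0 hq0 hq1 hrpos hr1
  -- build the assignment function
  set v : Fin m → Fin L → Fin k := fun x j =>
    if h : (x:ℕ) < L + 1 then (if (x:ℕ) = (j:ℕ) then ⟨1, by omega⟩ else ⟨0, by omega⟩)
    else w ⟨(x:ℕ) - (L+1), by have := x.isLt; omega⟩ j with hv
  have hvlow : ∀ (x : Fin m), (x:ℕ) < L + 1 → ∀ (j0 : Fin L),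
      v x j0 = if (x:ℕ) = (j0:ℕ) then (⟨1, by omega⟩ : Fin k) else ⟨0, by omega⟩ := by
    intro x hx j0
    rw [hv]
    simp only
    rw [dif_pos hx]
  have hvhigh : ∀ (x : Fin m) (hx9 : (x:ℕ) - (L+1) < M), ¬ ((x:ℕ) < L + 1) → ∀ (j0 : Fin L),
      v x j0 = w ⟨(x:ℕ) - (L+1), hx9⟩ j0 := by
    intro x hx9 hx j0
    rw [hv]
    simp only
    rw [dif_neg hx]
  refine ⟨fun j i => univ.filter (fun x => v x j = i), ?_, ?_, ?_, ?_⟩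
  · -- disjointness
    intro j i i' hne
    rw [Finset.disjoint_left]
    intro x hx hx'
    rw [Finset.mem_filter] at hx hx'
    exact hne (hx.2.symm.trans hx'.2)
  · -- covering
    intro j
    ext x
    simp only [Finset.mem_biUnion, Finset.mem_filter, Finset.mem_univ, true_and, iff_true]
    exact ⟨v x j, rfl⟩
  · -- distinctness of the partitions
    intro j j' himg
    by_contra hne
    have himg' : Finset.univ.image (fun i => univ.filter (fun x => v x j = i)) =
        Finset.univ.image (fun i => univ.filter (fun x => v x j' = i)) := himg
    have hjj' : (j:ℕ) ≠ (j':ℕ) := fun hh => hne (Fin.ext hh)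
    have hjL := j.isLt
    have hj'L := j'.isLt
    have hjm : (j:ℕ) < m := by omega
    have hLm' : L < m := by omega
    have hvaj : v ⟨(j:ℕ), hjm⟩ j = ⟨1, by omega⟩ := by
      rw [hvlow ⟨(j:ℕ), hjm⟩ (by simp <;> omega) j]
      simp
    have hvaj' : v ⟨(j:ℕ), hjm⟩ j' = ⟨0, by omega⟩ := by
      rw [hvlow ⟨(j:ℕ), hjm⟩ (by simp <;> omega) j']
      simp only [Fin.val_mk]
      rw [if_neg hjj']
    have hvbj : v ⟨L, hLm'⟩ j = ⟨0, by omega⟩ := by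
      rw [hvlow ⟨L, hLm'⟩ (by simp) j]
      simp only [Fin.val_mk]
      rw [if_neg (by omega)]
    have hvbj' : v ⟨L, hLm'⟩ j' = ⟨0, by omega⟩ := by
      rw [hvlow ⟨L, hLm'⟩ (by simp) j']
      simp only [Fin.val_mk]
      rw [if_neg (by omega)]
    have hBmem : univ.filter (fun x => v x j' = ⟨0, by omega⟩) ∈
        Finset.univ.image (fun i => univ.filter (fun x => v x j' = i)) :=
      Finset.mem_image_of_mem _ (Finset.mem_univ (⟨0, by omega⟩ : Fin k))
    rw [← himg'] at hBmem
    obtain ⟨s, -, hs⟩ := Finset.mem_image.1 hBmem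
    have haB : (⟨(j:ℕ), hjm⟩ : Fin m) ∈ univ.filter (fun x => v x j' = ⟨0, by omega⟩) :=
      Finset.mem_filter.2 ⟨Finset.mem_univ _, hvaj'⟩
    have hbB : (⟨L, hLm'⟩ : Fin m) ∈ univ.filter (fun x => v x j' = ⟨0, by omega⟩) :=
      Finset.mem_filter.2 ⟨Finset.mem_univ _, hvbj'⟩
    rw [← hs] at haB hbB
    have h1s : v ⟨(j:ℕ), hjm⟩ j = s := (Finset.mem_filter.1 haB).2
    have h2s : v ⟨L, hLm'⟩ j = s := (Finset.mem_filter.1 hbB).2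
    rw [hvaj] at h1s
    rw [hvbj] at h2s
    have : (1:ℕ) = 0 := congrArg Fin.val (h1s.trans h2s.symm)
    omega
  · -- every rainbow cover is large
    intro S hSinj hScov
    by_contra hcon
    push_neg at hcon
    have hSD : S.card ≤ D := (hDlt S.card hcon).le
    apply hw S hSD hSinj
    intro y
    have hylt : (y:ℕ) < M := y.isLt
    have hxm : L + 1 + (y:ℕ) < m := by omega
    have hx : (⟨L+1+(y:ℕ), hxm⟩ : Fin m) ∈
        S.biUnion (fun p => univ.filter (fun x => v x p.1 = p.2)) := by
      rw [hScov]; exact Finset.mem_univ _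
    obtain ⟨p, hp, hxp⟩ := Finset.mem_biUnion.1 hx
    refine ⟨p, hp, ?_⟩
    have hv2 : v ⟨L+1+(y:ℕ), hxm⟩ p.1 = p.2 := (Finset.mem_filter.1 hxp).2
    have hx9 : ((⟨L+1+(y:ℕ), hxm⟩ : Fin m):ℕ) - (L+1) < M := by simp <;> omega
    rw [hvhigh ⟨L+1+(y:ℕ), hxm⟩ hx9 (by simp <;> omega) p.1] at hv2
    have hfin_eq : (⟨((⟨L+1+(y:ℕ), hxm⟩ : Fin m):ℕ) - (L+1), hx9⟩ : Fin M) = y :=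
      Fin.ext (by simp <;> omega)
    rw [hfin_eq] at hv2
    exact hv2



/-- For every real `c ≥ 0` and every real `ε > 0` there exists `k₀`
such that for every `k ≥ k₀` there exists `m₀` such that for every `m ≥ m₀` there is
a partition system `β(m, L, k, d)` with universe of size `m`, with
`L = ⌈(log₂ m)^c⌉` distinct partitions, each consisting of `k` pairwise disjoint
parts covering the universe, such that every cover of the universe by parts in
which no two chosen parts belong to the same partition uses at least
`(1 − ε)·k·ln m` parts. -/
theorem partition_system_exists :
    ∀ c : ℝ, 0 ≤ c → ∀ ε : ℝ, 0 < ε →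
      ∃ k₀ : ℕ, ∀ k : ℕ, k₀ ≤ k →
        ∃ m₀ : ℕ, ∀ m : ℕ, m₀ ≤ m →
          ∃ P : Fin ⌈(Real.logb 2 m) ^ c⌉₊ → Fin k → Finset (Fin m),
            (∀ j, ∀ i i' : Fin k, i ≠ i' → Disjoint (P j i) (P j i')) ∧
            (∀ j, Finset.univ.biUnion (P j) = Finset.univ) ∧
            Function.Injective (fun j => Finset.univ.image (P j)) ∧
            (∀ S : Finset (Fin ⌈(Real.logb 2 m) ^ c⌉₊ × Fin k),
              (∀ x ∈ S, ∀ y ∈ S, x.1 = y.1 → x = y) →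
              S.biUnion (fun p => P p.1 p.2) = Finset.univ →
              (1 - ε) * k * Real.log m ≤ S.card) := by
  intro c hc ε hε
  have hε'pos : 0 < min ε (1/2) := lt_min hε (by norm_num)
  have hε'le : min ε (1/2) ≤ 1/2 := min_le_right _ _
  have hε'ε : min ε (1/2) ≤ ε := min_le_left _ _
  obtain ⟨k₀, hk₀⟩ := partition_main c hc (min ε (1/2)) hε'pos hε'le
  refine ⟨k₀, ?_⟩
  intro k hk
  obtain ⟨m₀, hm₀⟩ := hk₀ k hk
  refine ⟨max m₀ 1, ?_⟩
  intro m hm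
  obtain ⟨P, hP1, hP2, hP3, hP4⟩ := hm₀ m (le_trans (le_max_left _ _) hm)
  refine ⟨P, hP1, hP2, hP3, ?_⟩
  intro S h1 h2
  have h4 := hP4 S h1 h2
  have hm1 : 1 ≤ m := le_trans (le_max_right _ _) hm
  have hlog0 : 0 ≤ Real.log m := Real.log_nonneg (by exact_mod_cast hm1)
  have hmono : (1-ε)*k*Real.log m ≤ (1 - min ε (1/2))*k*Real.log m := by
    apply mul_le_mul_of_nonneg_right _ hlog0
    apply mul_le_mul_of_nonneg_right _ (Nat.cast_nonneg k)
    linarith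
  linarith
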